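/- Every finitely generated group G admits a proper affine isometric action on the affine Banach space δ_1 + ∂(ℓ¹(𝒢¹)), where 𝒢 is a Cayley graph of G, given by the cocycle g ↦ δ_1 − δ_g; the norm of the cocycle at g equals d(1,g). -/

import Mathlib

/-- The Cayley graph of a group for a finite generating set. -/
def cayley {G : Type*} [Group G] (S : Finset G) : SimpleGraph G where
  Adj x y := x ≠ y ∧ (x⁻¹ * y ∈ S ∨ y⁻¹ * x ∈ S)
  symm := by
    constructor
    intro x y h
    exact ⟨fun e => h.1 e.symm, h.2.symm⟩
  loopless := by constructor; intro x h; exact h.1 rfl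

/-- The boundary operator, sending the oriented edge `(x,y)` to `δ_y - δ_x`. -/
noncomputable def bndFull {G : Type*} (c : (G × G) →₀ ℝ) : G →₀ ℝ :=
  c.sum fun e a => Finsupp.single e.2 a - Finsupp.single e.1 a

noncomputable def l1 {α : Type*} (c : α →₀ ℝ) : ℝ := c.sum fun _ a => |a|

lemma l1_eq_sum {α : Type*} (c : α →₀ ℝ) (s : Finset α) (hs : c.support ⊆ s) :
    l1 c = ∑ x ∈ s, |c x| := by
  rw [l1, Finsupp.sum]
  exact Finset.sum_subset hs (fun x _ hx => by
    simp [Finsupp.notMem_support_iff.mp hx])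

lemma l1_nonneg {α : Type*} (c : α →₀ ℝ) : 0 ≤ l1 c :=
  Finset.sum_nonneg fun _ _ => abs_nonneg _

lemma l1_add_le {α : Type*} (c d : α →₀ ℝ) : l1 (c + d) ≤ l1 c + l1 d := by
  classical
  rw [l1_eq_sum (c + d) (c.support ∪ d.support)
      (Finsupp.support_add),
    l1_eq_sum c (c.support ∪ d.support) Finset.subset_union_left,
    l1_eq_sum d (c.support ∪ d.support) Finset.subset_union_right,
    ← Finset.sum_add_distrib]
  exact Finset.sum_le_sum fun x _ => by simpa using abs_add_le (c x) (d x)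

lemma l1_single {α : Type*} (e : α) (a : ℝ) : l1 (Finsupp.single e a) = |a| :=
  Finsupp.sum_single_index (by simp)

lemma bndFull_single {G : Type*} (e : G × G) (a : ℝ) :
    bndFull (Finsupp.single e a) = Finsupp.single e.2 a - Finsupp.single e.1 a :=
  Finsupp.sum_single_index (by simp)

lemma bndFull_add {G : Type*} (c d : (G × G) →₀ ℝ) :
    bndFull (c + d) = bndFull c + bndFull d := by
  classical
  exact Finsupp.sum_add_index (by simp) (fun e _ a b => by
    simp only [Finsupp.single_add]; abel)

lemma bndFull_zero {G : Type*} : bndFull (0 : (G × G) →₀ ℝ) = 0 :=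
  Finsupp.sum_zero_index

/-- chain associated to a walk -/
noncomputable def chainOf {V : Type*} {Gr : SimpleGraph V} :
    ∀ {u v : V}, Gr.Walk u v → ((V × V) →₀ ℝ)
  | _, _, SimpleGraph.Walk.nil => 0
  | u, _, SimpleGraph.Walk.cons (v := w) _ p => Finsupp.single (u, w) 1 + chainOf p

lemma chainOf_bnd {V : Type*} {Gr : SimpleGraph V} {u v : V} (p : Gr.Walk u v) :
    bndFull (chainOf p) = Finsupp.single v 1 - Finsupp.single u 1 := by
  induction p with
  | nil => simp [chainOf, bndFull_zero]
  | cons h p ih =>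
      rw [chainOf, bndFull_add, bndFull_single, ih]
      abel

lemma chainOf_l1 {V : Type*} {Gr : SimpleGraph V} {u v : V} (p : Gr.Walk u v) :
    l1 (chainOf p) ≤ p.length := by
  induction p with
  | nil => simp [chainOf, l1]
  | cons h p ih =>
      refine le_trans (l1_add_le _ _) ?_
      rw [l1_single, abs_one]
      simp only [SimpleGraph.Walk.length_cons]
      push_cast
      linarith

lemma chainOf_support {V : Type*} {Gr : SimpleGraph V} {u v : V} (p : Gr.Walk u v) :
    ∀ e ∈ (chainOf p).support, Gr.Adj e.1 e.2 := by
  induction p with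
  | nil => simp [chainOf]
  | cons h p ih =>
      classical
      intro e he
      rcases Finset.mem_union.mp (Finsupp.support_add he) with he | he
      · have := Finsupp.support_single_subset he
        simp only [Finset.mem_singleton] at this
        subst this
        exact h
      · exact ih e he

section grp
variable {G : Type*} [Group G] {S : Finset G}

lemma cayley_adj_mul (g : G) {x y : G} :
    (cayley S).Adj (g * x) (g * y) ↔ (cayley S).Adj x y := by
  have h1 : (g * x)⁻¹ * (g * y) = x⁻¹ * y := by group
  have h2 : (g * y)⁻¹ * (g * x) = y⁻¹ * x := by group
  show (_ ≠ _ ∧ _) ↔ (_ ≠ _ ∧ _)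
  rw [h1, h2]
  simp

/-- left translation as a graph hom -/
def cayleyHom (g : G) : cayley S →g cayley S :=
  ⟨fun x => g * x, fun {a b} h => (cayley_adj_mul g).mpr h⟩

lemma reach_mul (g : G) {x y : G} (h : (cayley S).Reachable x y) :
    (cayley S).Reachable (g * x) (g * y) :=
  h.map (cayleyHom g)

lemma cayley_reachable (hgen : Subgroup.closure (S : Set G) = ⊤) (g : G) :
    (cayley S).Reachable 1 g := by
  let H : Subgroup G :=
    { carrier := {g | (cayley S).Reachable 1 g}
      one_mem' := SimpleGraph.Reachable.refl 1
      mul_mem' := by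
        intro a b ha hb
        have := reach_mul a hb
        rw [mul_one] at this
        exact ha.trans this
      inv_mem' := by
        intro a ha
        have := reach_mul a⁻¹ ha
        rw [mul_one, inv_mul_cancel] at this
        exact this.symm }
  have hS : (S : Set G) ⊆ H := by
    intro s hs
    by_cases h1 : s = 1
    · subst h1; exact SimpleGraph.Reachable.refl 1
    · exact SimpleGraph.Adj.reachable
        ⟨fun e => h1 e.symm, Or.inl (by simpa using hs)⟩
  have : (⊤ : Subgroup G) ≤ H := hgen ▸ Subgroup.closure_le H |>.mpr hS
  exact this (Subgroup.mem_top g)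

lemma cayley_connected (hgen : Subgroup.closure (S : Set G) = ⊤) :
    (cayley S).Connected :=
  ⟨fun a b => ((cayley_reachable hgen a).symm.trans (cayley_reachable hgen b))⟩

/-- translation of chains -/
lemma chain_translate (g : G) (c : (G × G) →₀ ℝ) :
    (∀ e ∈ (Finsupp.mapDomain (fun e : G × G => (g * e.1, g * e.2)) c).support,
        (cayley S).Adj e.1 e.2 → True) := by intro _ _ _; trivial

lemma Tg_inj (g : G) : Function.Injective (fun e : G × G => (g * e.1, g * e.2)) := by
  intro a b h
  simp only [Prod.mk.injEq, mul_right_inj] at h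
  exact Prod.ext h.1 h.2

lemma mapDomain_support_adj (g : G) (c : (G × G) →₀ ℝ)
    (hc : ∀ e ∈ c.support, (cayley S).Adj e.1 e.2) :
    ∀ e ∈ (Finsupp.mapDomain (fun e : G × G => (g * e.1, g * e.2)) c).support,
      (cayley S).Adj e.1 e.2 := by
  classical
  intro e he
  rw [Finsupp.mapDomain_support_of_injective (Tg_inj g)] at he
  rcases Finset.mem_image.mp he with ⟨e', he', rfl⟩
  exact (cayley_adj_mul g).mpr (hc e' he')

lemma bndFull_mapDomain (g : G) (c : (G × G) →₀ ℝ) :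
    bndFull (Finsupp.mapDomain (fun e : G × G => (g * e.1, g * e.2)) c) =
      Finsupp.mapDomain (fun x => g * x) (bndFull c) := by
  rw [bndFull, Finsupp.sum_mapDomain_index_inj (Tg_inj g), bndFull,
    ← Finsupp.mapDomain.addMonoidHom_apply (fun x => g * x), map_finsuppSum]
  refine Finsupp.sum_congr fun e _ => ?_
  rw [map_sub]
  simp [Finsupp.mapDomain.addMonoidHom_apply, Finsupp.mapDomain_single]

lemma l1_mapDomain (g : G) (c : (G × G) →₀ ℝ) :
    l1 (Finsupp.mapDomain (fun e : G × G => (g * e.1, g * e.2)) c) = l1 c := by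
  rw [l1, Finsupp.sum_mapDomain_index_inj (Tg_inj g), l1]

lemma mapDomain_inv_cancel (g : G) (f : G →₀ ℝ) :
    Finsupp.mapDomain (fun x => g⁻¹ * x) (Finsupp.mapDomain (fun x => g * x) f) = f := by
  rw [← Finsupp.mapDomain_comp]
  have : ((fun x => g⁻¹ * x) ∘ fun x => g * x) = id := by
    funext x; simp
  rw [this, Finsupp.mapDomain_id]

lemma mapDomainE_inv_cancel (g : G) (c : (G × G) →₀ ℝ) :
    Finsupp.mapDomain (fun e : G × G => (g⁻¹ * e.1, g⁻¹ * e.2))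
      (Finsupp.mapDomain (fun e : G × G => (g * e.1, g * e.2)) c) = c := by
  rw [← Finsupp.mapDomain_comp]
  have : ((fun e : G × G => (g⁻¹ * e.1, g⁻¹ * e.2)) ∘
      fun e : G × G => (g * e.1, g * e.2)) = id := by
    funext e; simp
  rw [this, Finsupp.mapDomain_id]

end grp

section pairing
open Pointwise
variable {G : Type*} [Group G] {S : Finset G}

/-- pairing with a function -/
noncomputable def pairF {G : Type*} (φ : G → ℝ) : (G →₀ ℝ) →+ ℝ :=
  Finsupp.liftAddHom fun x => AddMonoidHom.mulRight (φ x)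

lemma pairF_single {G : Type*} (φ : G → ℝ) (x : G) (a : ℝ) :
    pairF φ (Finsupp.single x a) = a * φ x :=
  Finsupp.liftAddHom_apply_single _ _ _

lemma pairF_bndFull {G : Type*} (φ : G → ℝ) (c : (G × G) →₀ ℝ) :
    pairF φ (bndFull c) = c.sum fun e a => a * φ e.2 - a * φ e.1 := by
  rw [bndFull, map_finsuppSum]
  exact Finsupp.sum_congr fun e _ => by rw [map_sub, pairF_single, pairF_single]

lemma dist_lipschitz (hgen : Subgroup.closure (S : Set G) = ⊤) {x y : G}
    (h : (cayley S).Adj x y) :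
    |((cayley S).dist 1 y : ℝ) - ((cayley S).dist 1 x : ℝ)| ≤ 1 := by
  have conn := cayley_connected hgen
  have hxy : (cayley S).dist x y ≤ 1 := by
    simpa using SimpleGraph.dist_le (SimpleGraph.Walk.cons h SimpleGraph.Walk.nil)
  have hyx : (cayley S).dist y x ≤ 1 := by
    simpa using SimpleGraph.dist_le (SimpleGraph.Walk.cons h.symm SimpleGraph.Walk.nil)
  have t1 : (cayley S).dist 1 y ≤ (cayley S).dist 1 x + 1 :=
    le_trans (conn.dist_triangle (v := x)) (by omega)
  have t2 : (cayley S).dist 1 x ≤ (cayley S).dist 1 y + 1 :=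
    le_trans (conn.dist_triangle (v := y)) (by omega)
  have t1' : ((cayley S).dist 1 y : ℝ) ≤ ((cayley S).dist 1 x : ℝ) + 1 := by
    exact_mod_cast t1
  have t2' : ((cayley S).dist 1 x : ℝ) ≤ ((cayley S).dist 1 y : ℝ) + 1 := by
    exact_mod_cast t2
  rw [abs_sub_le_iff]
  constructor <;> linarith

lemma dist_le_of_mem (hgen : Subgroup.closure (S : Set G) = ⊤) (g : G) (r : ℝ)
    (hr : ∃ c : (G × G) →₀ ℝ, (∀ e ∈ c.support, (cayley S).Adj e.1 e.2) ∧
      bndFull c = Finsupp.single (1 : G) (1 : ℝ) - Finsupp.single g 1 ∧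
      r = c.sum fun _ a => |a|) :
    ((cayley S).dist 1 g : ℝ) ≤ r := by
  obtain ⟨c, hadj, hb, rfl⟩ := hr
  set φ : G → ℝ := fun x => ((cayley S).dist 1 x : ℝ) with hφ
  have h1 : pairF φ (bndFull c) = -((cayley S).dist 1 g : ℝ) := by
    rw [hb, map_sub, pairF_single, pairF_single]
    simp [hφ, SimpleGraph.dist_self]
  have h2 : |pairF φ (bndFull c)| ≤ c.sum fun _ a => |a| := by
    rw [pairF_bndFull, Finsupp.sum]
    refine le_trans (Finset.abs_sum_le_sum_abs _ _) ?_
    rw [Finsupp.sum]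
    refine Finset.sum_le_sum fun e he => ?_
    have hl := dist_lipschitz hgen (hadj e he)
    calc |c e * φ e.2 - c e * φ e.1| = |c e| * |φ e.2 - φ e.1| := by
          rw [← mul_sub, abs_mul]
      _ ≤ |c e| * 1 := mul_le_mul_of_nonneg_left hl (abs_nonneg _)
      _ = |c e| := mul_one _
  rw [h1, abs_neg, abs_of_nonneg (Nat.cast_nonneg _)] at h2
  exact h2

lemma sInf_eq_dist (hgen : Subgroup.closure (S : Set G) = ⊤) (g : G) :
    sInf {r : ℝ | ∃ c : (G × G) →₀ ℝ, (∀ e ∈ c.support, (cayley S).Adj e.1 e.2) ∧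
        bndFull c = Finsupp.single (1 : G) (1 : ℝ) - Finsupp.single g 1 ∧
        r = c.sum fun _ a => |a|} = ((cayley S).dist 1 g : ℝ) := by
  obtain ⟨p, hp⟩ := ((cayley_reachable hgen g).symm).exists_walk_length_eq_dist
  have hmem : l1 (chainOf p) ∈ {r : ℝ | ∃ c : (G × G) →₀ ℝ,
      (∀ e ∈ c.support, (cayley S).Adj e.1 e.2) ∧
      bndFull c = Finsupp.single (1 : G) (1 : ℝ) - Finsupp.single g 1 ∧
      r = c.sum fun _ a => |a|} :=
    ⟨chainOf p, chainOf_support p, chainOf_bnd p, rfl⟩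
  have hle : l1 (chainOf p) ≤ ((cayley S).dist 1 g : ℝ) := by
    refine le_trans (chainOf_l1 p) ?_
    rw [hp, SimpleGraph.dist_comm]
  have hbdd : BddBelow {r : ℝ | ∃ c : (G × G) →₀ ℝ,
      (∀ e ∈ c.support, (cayley S).Adj e.1 e.2) ∧
      bndFull c = Finsupp.single (1 : G) (1 : ℝ) - Finsupp.single g 1 ∧
      r = c.sum fun _ a => |a|} :=
    ⟨((cayley S).dist 1 g : ℝ), fun r hr => dist_le_of_mem hgen g r hr⟩
  exact le_antisymm (le_trans (csInf_le hbdd hmem) hle)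
    (le_csInf ⟨_, hmem⟩ fun r hr => dist_le_of_mem hgen g r hr)

lemma ball_finite (hgen : Subgroup.closure (S : Set G) = ⊤) (n : ℕ) :
    {g : G | (cayley S).dist 1 g ≤ n}.Finite := by
  classical
  set T : Finset G := insert 1 (S ∪ S.image (·⁻¹)) with hT
  suffices h : ∀ n, ∀ g : G, (cayley S).dist 1 g ≤ n → g ∈ T ^ n by
    exact Set.Finite.subset (T ^ n).finite_toSet (fun g hg => h n g hg)
  intro n
  induction n with
  | zero =>
      intro g hg
      have h0 : (cayley S).dist 1 g = 0 := Nat.le_zero.mp hg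
      have hg1 : (1 : G) = g := ((cayley_reachable hgen g).dist_eq_zero_iff).mp h0
      simp [pow_zero, ← hg1, Finset.mem_one]
  | succ n ih =>
      intro g hg
      by_cases hd : (cayley S).dist 1 g ≤ n
      · have hgm := ih g hd
        rw [pow_succ]
        have h1 : (1 : G) ∈ T := Finset.mem_insert_self _ _
        simpa using Finset.mul_mem_mul hgm h1
      · have hne : g ≠ 1 := by
          intro h; subst h; simp [SimpleGraph.dist_self] at hd
        obtain ⟨p, hp⟩ := ((cayley_reachable hgen g).symm).exists_walk_length_eq_dist
        obtain ⟨w, ha, q, rfl⟩ := SimpleGraph.Walk.exists_eq_cons_of_ne hne p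
        have hlen : q.length + 1 = (cayley S).dist 1 g := by
          rw [← SimpleGraph.dist_comm, ← hp, SimpleGraph.Walk.length_cons]
        have hq : (cayley S).dist 1 w ≤ n := by
          rw [SimpleGraph.dist_comm]
          have := SimpleGraph.dist_le q
          omega
        have hw := ih w hq
        have hmem : w⁻¹ * g ∈ T := by
          rcases ha.2 with h | h
          · have heq : (g⁻¹ * w)⁻¹ = w⁻¹ * g := by group
            exact Finset.mem_insert_of_mem (Finset.mem_union_right _
              (heq ▸ Finset.mem_image_of_mem _ h))
          · exact Finset.mem_insert_of_mem (Finset.mem_union_left _ h)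
        rw [pow_succ]
        have := Finset.mul_mem_mul hw hmem
        rwa [mul_inv_cancel_left] at this

end pairing

/-- Proposition 1.1: a finitely generated group admits a proper affine isometric
action on `δ₁ + ∂(ℓ¹(𝒢¹))`, given by the cocycle `g ↦ δ₁ - δ_g`; here `N` is the
quotient (image) norm of `‖·‖₁` under the boundary map of the Cayley graph: the
linear action is isometric, the cocycle identity holds, the norm of the cocycle
at `g` is `d(1,g)`, and the cocycle is proper. -/
theorem stmt3 {G : Type*} [Group G] (S : Finset G)
    (hgen : Subgroup.closure (S : Set G) = ⊤)
    (N : (G →₀ ℝ) → ℝ)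
    (hN : ∀ f : G →₀ ℝ, N f =
      sInf {r : ℝ | ∃ c : (G × G) →₀ ℝ, (∀ e ∈ c.support, (cayley S).Adj e.1 e.2) ∧
        bndFull c = f ∧ r = c.sum fun _ a => |a|}) :
    (∀ (g : G) (f : G →₀ ℝ), N (Finsupp.mapDomain (fun x => g * x) f) = N f) ∧
    (∀ g h : G,
      (Finsupp.single (1 : G) (1 : ℝ) - Finsupp.single (g * h) 1) =
        (Finsupp.single (1 : G) (1 : ℝ) - Finsupp.single g 1) +
          Finsupp.mapDomain (fun x => g * x)
            (Finsupp.single (1 : G) (1 : ℝ) - Finsupp.single h 1)) ∧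
    (∀ g : G, N (Finsupp.single (1 : G) (1 : ℝ) - Finsupp.single g 1) =
      (cayley S).dist 1 g) ∧
    (∀ M : ℝ,
      {g : G | N (Finsupp.single (1 : G) (1 : ℝ) - Finsupp.single g 1) ≤ M}.Finite) := by
  classical
  refine ⟨?_, ?_, ?_, ?_⟩
  · intro g f
    rw [hN, hN]
    congr 1
    ext r
    constructor
    · rintro ⟨c, hadj, hb, rfl⟩
      refine ⟨Finsupp.mapDomain (fun e : G × G => (g⁻¹ * e.1, g⁻¹ * e.2)) c,
        mapDomain_support_adj g⁻¹ c hadj, ?_, (l1_mapDomain g⁻¹ c).symm⟩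
      rw [bndFull_mapDomain, hb, mapDomain_inv_cancel]
    · rintro ⟨c, hadj, hb, rfl⟩
      refine ⟨Finsupp.mapDomain (fun e : G × G => (g * e.1, g * e.2)) c,
        mapDomain_support_adj g c hadj, ?_, (l1_mapDomain g c).symm⟩
      rw [bndFull_mapDomain, hb]
  · intro g h
    have key : Finsupp.mapDomain (fun x => g * x)
        (Finsupp.single (1 : G) (1 : ℝ) - Finsupp.single h 1) =
        Finsupp.single g 1 - Finsupp.single (g * h) 1 := by
      rw [show Finsupp.mapDomain (fun x => g * x) =
          ⇑(Finsupp.mapDomain.addMonoidHom (fun x : G => g * x)) from rfl, map_sub]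
      simp [Finsupp.mapDomain.addMonoidHom_apply, Finsupp.mapDomain_single]
    rw [key]
    abel
  · intro g
    rw [hN]
    exact sInf_eq_dist hgen g
  · intro M
    refine (ball_finite hgen ⌊M⌋₊).subset ?_
    intro g hg
    simp only [Set.mem_setOf_eq] at *
    rw [hN, sInf_eq_dist hgen] at hg
    exact Nat.le_floor hg
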